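/- Let (S,∘) be a bijective RC-quasigroup of cardinal n and M its structure monoid. For each subset I of S let Δ_I denote the right-lcm of I in M. Then Δ_I is a product of card(I) generators (its length is card(I)), the map I ↦ Δ_I from subsets of S to M is injective, and the right-lcm Δ of S has exactly 2ⁿ left-divisors in M, namely the elements Δ_I for I ⊆ S. -/

import Mathlib

/-- The right-cyclic law: `(x∘y)∘(x∘z) = (y∘x)∘(y∘z)`. -/
def RCLaw {S : Type*} (op : S → S → S) : Prop :=
  ∀ x y z : S, op (op x y) (op x z) = op (op y x) (op y z)

/-- The defining relations `s(s∘t) = t(t∘s)`, `s ≠ t`, of the structure monoid, as a relation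
on the free monoid over `S`. -/
def rcRel {S : Type*} (op : S → S → S) : FreeMonoid S → FreeMonoid S → Prop :=
  fun a b => ∃ s t : S, s ≠ t ∧
    a = FreeMonoid.of s * FreeMonoid.of (op s t) ∧ b = FreeMonoid.of t * FreeMonoid.of (op t s)

/-- The structure monoid of `(S,∘)`: the monoid presented by generators `S` and relations
`s(s∘t) = t(t∘s)` for `s ≠ t`, realized as the quotient of the free monoid on `S` by the
congruence generated by these relations. -/
abbrev StructureMonoid {S : Type*} (op : S → S → S) := (conGen (rcRel op)).Quotient

/-- The canonical generator of the structure monoid associated with `s ∈ S`. -/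
def smGen {S : Type*} (op : S → S → S) (s : S) : StructureMonoid op :=
  (conGen (rcRel op)).mk' (FreeMonoid.of s)

section Aux

attribute [local instance] Classical.propDecidable

variable {S : Type*} (op : S → S → S)

/-- The cocycle on words: `J (s :: w) = e_s + (J w) ∘ (op s)`. -/
noncomputable def Jw : List S → S → ℕ
  | [] => fun _ => 0
  | s :: w => fun x => (if x = s then 1 else 0) + Jw w (op s x)

/-- The permutation associated with a word: `Φ (s :: w) = Φ w ∘ (op s)`. -/
def Phw : List S → S → S
  | [] => id
  | s :: w => fun x => Phw w (op s x)

lemma Jw_append (u v : List S) (x : S) :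
    Jw op (u ++ v) x = Jw op u x + Jw op v (Phw op u x) := by
  induction u generalizing x with
  | nil => simp [Jw, Phw]
  | cons s u ih => simp [Jw, Phw, ih, add_assoc]

lemma Phw_append (u v : List S) (x : S) :
    Phw op (u ++ v) x = Phw op v (Phw op u x) := by
  induction u generalizing x with
  | nil => simp [Phw]
  | cons s u ih => simp [Phw, ih]

lemma Phw_bijective (hlb : ∀ s : S, Function.Bijective (op s)) (u : List S) :
    Function.Bijective (Phw op u) := by
  induction u with
  | nil => exact Function.bijective_id
  | cons s u ih => exact ih.comp (hlb s)

/-- The congruence of having equal cocycle and permutation. -/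
noncomputable def JCon : Con (FreeMonoid S) where
  r a b := Jw op a.toList = Jw op b.toList ∧ Phw op a.toList = Phw op b.toList
  iseqv := ⟨fun _ => ⟨rfl, rfl⟩, fun h => ⟨h.1.symm, h.2.symm⟩,
    fun h h' => ⟨h.1.trans h'.1, h.2.trans h'.2⟩⟩
  mul' := by
    intro a b c d hab hcd
    constructor <;> funext x <;>
      simp [FreeMonoid.toList_mul, Jw_append, Phw_append, hab.1, hab.2, hcd.1, hcd.2]

lemma conGen_le_JCon (hRC : RCLaw op) (hlb : ∀ s : S, Function.Bijective (op s)) :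
    conGen (rcRel op) ≤ JCon op := by
  apply Con.conGen_le.mpr
  rintro a b ⟨s, t, hst, rfl, rfl⟩
  show Jw op _ = Jw op _ ∧ Phw op _ = Phw op _
  constructor
  · funext x
    show Jw op [s, op s t] x = Jw op [t, op t s] x
    simp only [Jw]
    have h1 : (op s x = op s t) ↔ x = t := (hlb s).1.eq_iff
    have h2 : (op t x = op t s) ↔ x = s := (hlb t).1.eq_iff
    by_cases hx : x = s <;> by_cases hx' : x = t <;> simp_all
  · funext x
    show Phw op [s, op s t] x = Phw op [t, op t s] x
    simp only [Phw]
    exact hRC s t x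

lemma Jw_eq_of_con (hRC : RCLaw op) (hlb : ∀ s : S, Function.Bijective (op s))
    {a b : FreeMonoid S} (h : conGen (rcRel op) a b) :
    Jw op a.toList = Jw op b.toList :=
  (conGen_le_JCon op hRC hlb h).1

variable [Fintype S]

lemma sum_Jw (hlb : ∀ s : S, Function.Bijective (op s)) (l : List S) :
    ∑ x, Jw op l x = l.length := by
  induction l with
  | nil => simp [Jw]
  | cons s w ih =>
    simp only [Jw, Finset.sum_add_distrib, List.length_cons]
    have h1 : ∑ x, (if x = s then 1 else 0 : ℕ) = 1 := by
      rw [Finset.sum_ite_eq' Finset.univ s (fun _ => 1)]; simp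
    have h2 : ∑ x, Jw op w (op s x) = ∑ y, Jw op w y :=
      Fintype.sum_bijective (op s) (hlb s) _ _ (fun x => rfl)
    rw [h1, h2, ih]; omega

/-- Surjectivity of the cocycle. -/
lemma Jw_surj (hlb : ∀ s : S, Function.Bijective (op s)) (a : S → ℕ) :
    ∃ l : List S, Jw op l = a := by
  generalize hN : ∑ x, a x = N
  induction N generalizing a with
  | zero =>
    refine ⟨[], funext fun x => ?_⟩
    have := Finset.sum_eq_zero_iff.mp hN x (Finset.mem_univ x)
    simp [Jw, this.symm]
  | succ N ih =>
    have : ∃ s, a s ≠ 0 := by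
      by_contra h
      push_neg at h
      simp [h] at hN
    obtain ⟨s, hs⟩ := this
    set g := Equiv.ofBijective (op s) (hlb s) with hg
    set c : S → ℕ := fun x => a x - (if x = s then 1 else 0) with hc
    have hcle : ∀ x ∈ Finset.univ, (if x = s then 1 else 0 : ℕ) ≤ a x := by
      intro x _; by_cases hx : x = s <;> simp [hx] <;> omega
    have hsum : ∑ x, c x = N := by
      rw [hc]
      rw [Finset.sum_tsub_distrib Finset.univ hcle]
      have h1 : ∑ x, (if x = s then 1 else 0 : ℕ) = 1 := by
        rw [Finset.sum_ite_eq' Finset.univ s (fun _ => 1)]; simp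
      rw [h1, hN]; omega
    set b : S → ℕ := fun y => c (g.symm y) with hb
    have hsumb : ∑ y, b y = N := by
      rw [hb, Equiv.sum_comp g.symm c, hsum]
    obtain ⟨w, hw⟩ := ih b hsumb
    refine ⟨s :: w, funext fun x => ?_⟩
    have hbx : b (op s x) = c x := by
      show c (g.symm (g x)) = c x
      rw [Equiv.symm_apply_apply]
    simp only [Jw, hw, hbx, hc]
    have := hcle x (Finset.mem_univ x)
    omega

variable {op}

lemma mk_eq_iff {a b : FreeMonoid S} :
    (conGen (rcRel op)).mk' a = (conGen (rcRel op)).mk' b ↔ conGen (rcRel op) a b :=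
  Con.eq _

lemma ofList_cons_cons (s t : S) (w : List S) :
    FreeMonoid.ofList (s :: t :: w) =
      (FreeMonoid.of s * FreeMonoid.of t) * FreeMonoid.ofList w := by
  rw [FreeMonoid.ofList_cons, FreeMonoid.ofList_cons, mul_assoc]

/-- Divisor detection: if the cocycle of `l` is positive at `x`, then `x` is a left divisor. -/
lemma exists_head (hlb : ∀ s : S, Function.Bijective (op s)) :
    ∀ l : List S, ∀ x : S, 1 ≤ Jw op l x →
      ∃ w : List S, conGen (rcRel op) (FreeMonoid.ofList l) (FreeMonoid.ofList (x :: w)) := by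
  intro l
  induction l with
  | nil => intro x h; simp [Jw] at h
  | cons s u ih =>
    intro x h
    by_cases hx : x = s
    · subst hx; exact ⟨u, (conGen (rcRel op)).refl _⟩
    · have h1 : 1 ≤ Jw op u (op s x) := by
        simp only [Jw, if_neg hx, zero_add] at h; exact h
      obtain ⟨w, hw⟩ := ih (op s x) h1
      refine ⟨op x s :: w, ?_⟩
      have step1 : conGen (rcRel op) (FreeMonoid.ofList (s :: u))
          (FreeMonoid.ofList (s :: op s x :: w)) := by
        rw [FreeMonoid.ofList_cons, FreeMonoid.ofList_cons]
        exact (conGen (rcRel op)).mul ((conGen (rcRel op)).refl _) hw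
      have hrel : conGen (rcRel op) (FreeMonoid.of s * FreeMonoid.of (op s x))
          (FreeMonoid.of x * FreeMonoid.of (op x s)) :=
        ConGen.Rel.of _ _ ⟨s, x, fun hsx => hx hsx.symm, rfl, rfl⟩
      have step2 : conGen (rcRel op) (FreeMonoid.ofList (s :: op s x :: w))
          (FreeMonoid.ofList (x :: op x s :: w)) := by
        rw [ofList_cons_cons, ofList_cons_cons]
        exact (conGen (rcRel op)).mul hrel ((conGen (rcRel op)).refl _)
      exact (conGen (rcRel op)).trans step1 step2

lemma Jw_strip (hlb : ∀ s : S, Function.Bijective (op s)) {s : S} {u v : List S}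
    (h : Jw op (s :: u) = Jw op (s :: v)) : Jw op u = Jw op v := by
  funext y
  obtain ⟨x, rfl⟩ := (hlb s).2 y
  have := congrFun h x
  simp only [Jw] at this
  omega

lemma length_eq_of_Jw (hlb : ∀ s : S, Function.Bijective (op s)) {u v : List S}
    (h : Jw op u = Jw op v) : u.length = v.length := by
  rw [← sum_Jw op hlb u, ← sum_Jw op hlb v, h]

/-- Injectivity of the cocycle modulo the congruence. -/
lemma Jw_inj (hRC : RCLaw op) (hlb : ∀ s : S, Function.Bijective (op s)) :
    ∀ n : ℕ, ∀ u v : List S, u.length = n → Jw op u = Jw op v →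
      conGen (rcRel op) (FreeMonoid.ofList u) (FreeMonoid.ofList v) := by
  intro n
  induction n with
  | zero =>
    intro u v hu hJ
    have hv : v.length = 0 := by rw [← length_eq_of_Jw hlb hJ, hu]
    rw [List.length_eq_zero_iff] at hu hv
    subst hu; subst hv
    exact (conGen (rcRel op)).refl _
  | succ n ih =>
    intro u v hu hJ
    have hv : v.length = n + 1 := by rw [← length_eq_of_Jw hlb hJ, hu]
    obtain ⟨s, u', rfl⟩ : ∃ s u', u = s :: u' := by
      cases u with
      | nil => simp at hu
      | cons a b => exact ⟨a, b, rfl⟩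
    obtain ⟨t, v', rfl⟩ : ∃ t v', v = t :: v' := by
      cases v with
      | nil => simp at hv
      | cons a b => exact ⟨a, b, rfl⟩
    have hu' : u'.length = n := by simpa using hu
    by_cases hst : s = t
    · subst hst
      have hJ' : Jw op u' = Jw op v' := Jw_strip hlb hJ
      have := ih u' v' hu' hJ'
      rw [FreeMonoid.ofList_cons, FreeMonoid.ofList_cons]
      exact (conGen (rcRel op)).mul ((conGen (rcRel op)).refl _) this
    · have h1 : 1 ≤ Jw op u' (op s t) := by
        have h0 := congrFun hJ t
        simp only [Jw] at h0
        rw [if_neg (Ne.symm hst)] at h0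
        simp only [if_true] at h0
        omega
      obtain ⟨w, hw⟩ := exists_head hlb u' (op s t) h1
      have step1 : conGen (rcRel op) (FreeMonoid.ofList (s :: u'))
          (FreeMonoid.ofList (s :: op s t :: w)) := by
        rw [FreeMonoid.ofList_cons, FreeMonoid.ofList_cons]
        exact (conGen (rcRel op)).mul ((conGen (rcRel op)).refl _) hw
      have step2 : conGen (rcRel op) (FreeMonoid.ofList (s :: op s t :: w))
          (FreeMonoid.ofList (t :: op t s :: w)) := by
        rw [ofList_cons_cons, ofList_cons_cons]
        exact (conGen (rcRel op)).mul (ConGen.Rel.of _ _ ⟨s, t, hst, rfl, rfl⟩)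
          ((conGen (rcRel op)).refl _)
      have hJ2 : Jw op (t :: op t s :: w) = Jw op (t :: v') := by
        have e1 : Jw op (s :: u') = Jw op (t :: op t s :: w) :=
          Jw_eq_of_con op hRC hlb ((conGen (rcRel op)).trans step1 step2)
        rw [← e1]; exact hJ
      have hJ3 : Jw op (op t s :: w) = Jw op v' := Jw_strip hlb hJ2
      have hlen : (op t s :: w).length = n := by
        have e2 : Jw op u' = Jw op (op s t :: w) := Jw_eq_of_con op hRC hlb hw
        have := length_eq_of_Jw hlb e2
        simp only [List.length_cons] at this ⊢
        omega
      have step3 : conGen (rcRel op) (FreeMonoid.ofList (t :: op t s :: w))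
          (FreeMonoid.ofList (t :: v')) := by
        rw [FreeMonoid.ofList_cons (x := t), FreeMonoid.ofList_cons (x := t)]
        exact (conGen (rcRel op)).mul ((conGen (rcRel op)).refl _)
          (ih _ _ hlen hJ3)
      exact (conGen (rcRel op)).trans step1 ((conGen (rcRel op)).trans step2 step3)

lemma mk_ofList_eq_prod (l : List S) :
    (conGen (rcRel op)).mk' (FreeMonoid.ofList l) = (l.map (smGen op)).prod := by
  induction l with
  | nil => simpa [FreeMonoid.ofList_nil] using map_one (conGen (rcRel op)).mk'
  | cons s l ih =>
    rw [FreeMonoid.ofList_cons, map_mul, ih, List.map_cons, List.prod_cons]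
    rfl

lemma dvd_iff_Jw (hRC : RCLaw op) (hlb : ∀ s : S, Function.Bijective (op s)) (u v : List S) :
    (conGen (rcRel op)).mk' (FreeMonoid.ofList u) ∣ (conGen (rcRel op)).mk' (FreeMonoid.ofList v)
      ↔ ∀ x, Jw op u x ≤ Jw op v x := by
  constructor
  · rintro ⟨k, hk⟩
    obtain ⟨f, rfl⟩ := Con.mk'_surjective k
    intro x
    have heq : (conGen (rcRel op)).mk' (FreeMonoid.ofList v) =
        (conGen (rcRel op)).mk' (FreeMonoid.ofList (u ++ f.toList)) := by
      rw [hk, FreeMonoid.ofList_append, map_mul]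
      rfl
    have hJ : Jw op v = Jw op (u ++ f.toList) :=
      Jw_eq_of_con op hRC hlb (mk_eq_iff.mp heq)
    rw [hJ, Jw_append]
    exact Nat.le_add_right _ _
  · intro hle
    set P := Equiv.ofBijective _ (Phw_bijective op hlb u) with hP
    obtain ⟨w, hw⟩ := Jw_surj op hlb (fun y => Jw op v (P.symm y) - Jw op u (P.symm y))
    have hJ : Jw op (u ++ w) = Jw op v := by
      funext x
      rw [Jw_append]
      have e2 : Jw op w (Phw op u x) =
          Jw op v (P.symm (P x)) - Jw op u (P.symm (P x)) := congrFun hw (P x)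
      rw [Equiv.symm_apply_apply] at e2
      have := hle x
      omega
    have hcon := Jw_inj hRC hlb (u ++ w).length (u ++ w) v rfl hJ
    exact ⟨(conGen (rcRel op)).mk' (FreeMonoid.ofList w), by
      rw [← map_mul, ← FreeMonoid.ofList_append]
      exact (mk_eq_iff.mpr hcon).symm⟩

/-- The indicator function of a finite set. -/
noncomputable def chi (I : Finset S) : S → ℕ := fun x => if x ∈ I then 1 else 0

lemma sum_chi (I : Finset S) : ∑ x, chi I x = I.card := by
  rw [show (fun x => chi I x) = fun x => if x ∈ I then (1 : ℕ) else 0 from rfl]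
  rw [Finset.sum_ite_mem, Finset.univ_inter, Finset.sum_const, smul_eq_mul, mul_one]

end Aux

/-- Let `(S,∘)` be a bijective RC-quasigroup of cardinal `n`, `M` its
structure monoid, and for `I ⊆ S` let `Δ_I` be the right-lcm of `I` in `M`. Then `Δ_I` is a
product of `card I` generators, the map `I ↦ Δ_I` is injective, the left-divisors of `Δ_S`
are exactly the elements `Δ_I`, and `Δ_S` has exactly `2ⁿ` left-divisors. -/
theorem statement10 {S : Type*} [Fintype S] {n : ℕ} (hcard : Fintype.card S = n)
    (op : S → S → S)
    (hRC : RCLaw op) (hlb : ∀ s : S, Function.Bijective (op s))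
    (hbij : Function.Bijective (fun p : S × S => (op p.1 p.2, op p.2 p.1)))
    (D : Finset S → StructureMonoid op)
    (hD : ∀ I : Finset S,
      (∀ s ∈ I, smGen op s ∣ D I) ∧ ∀ k, (∀ s ∈ I, smGen op s ∣ k) → D I ∣ k) :
    (∀ I : Finset S, ∃ l : List S, l.length = I.card ∧ D I = (l.map (smGen op)).prod) ∧
    Function.Injective D ∧
    (∀ g : StructureMonoid op, g ∣ D Finset.univ ↔ ∃ I : Finset S, D I = g) ∧
    Nat.card {g : StructureMonoid op // g ∣ D Finset.univ} = 2 ^ n := by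
  classical
  -- Every `D I` has a representative word whose cocycle is the indicator of `I`.
  have hrep : ∀ I : Finset S, ∃ l : List S,
      (conGen (rcRel op)).mk' (FreeMonoid.ofList l) = D I ∧ Jw op l = chi I := by
    intro I
    obtain ⟨l0, hl0⟩ := Jw_surj op hlb (chi I)
    have h1 : ∀ s ∈ I, smGen op s ∣ (conGen (rcRel op)).mk' (FreeMonoid.ofList l0) := by
      intro s hs
      show (conGen (rcRel op)).mk' (FreeMonoid.ofList [s]) ∣ _
      refine (dvd_iff_Jw hRC hlb [s] l0).mpr fun x => ?_
      simp only [Jw, hl0, chi, add_zero]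
      by_cases hx : x = s
      · subst hx; simp [hs]
      · simp [hx]
    have h2 : D I ∣ (conGen (rcRel op)).mk' (FreeMonoid.ofList l0) := (hD I).2 _ h1
    obtain ⟨f, hf⟩ := Con.mk'_surjective (D I)
    have hf' : (conGen (rcRel op)).mk' (FreeMonoid.ofList f.toList) = D I := hf
    have hle1 : ∀ x, Jw op f.toList x ≤ chi I x := by
      have := (dvd_iff_Jw hRC hlb f.toList l0).mp (by rw [hf']; exact h2)
      intro x; rw [← hl0]; exact this x
    have hle2 : ∀ x, chi I x ≤ Jw op f.toList x := by
      intro x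
      by_cases hx : x ∈ I
      · have := (dvd_iff_Jw hRC hlb [x] f.toList).mp (by rw [hf']; exact (hD I).1 x hx)
        have h3 := this x
        simp only [Jw, if_pos rfl, add_zero] at h3
        simpa [chi, hx] using h3
      · simp [chi, hx]
    exact ⟨f.toList, hf', funext fun x => le_antisymm (hle1 x) (hle2 x)⟩
  -- indicator determines the set
  have chi_inj : ∀ I I' : Finset S, chi I = chi I' → I = I' := by
    intro I I' h
    ext x
    have := congrFun h x
    by_cases hx : x ∈ I <;> by_cases hx' : x ∈ I' <;> simp_all [chi]
  -- part A
  have partA : ∀ I : Finset S, ∃ l : List S,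
      l.length = I.card ∧ D I = (l.map (smGen op)).prod := by
    intro I
    obtain ⟨l, hl, hJ⟩ := hrep I
    refine ⟨l, ?_, ?_⟩
    · rw [← sum_Jw op hlb l, hJ, sum_chi]
    · rw [← hl, mk_ofList_eq_prod]
  -- part B
  have partB : Function.Injective D := by
    intro I I' h
    obtain ⟨l, hl, hJ⟩ := hrep I
    obtain ⟨l', hl', hJ'⟩ := hrep I'
    apply chi_inj
    rw [← hJ, ← hJ']
    have : (conGen (rcRel op)).mk' (FreeMonoid.ofList l) =
        (conGen (rcRel op)).mk' (FreeMonoid.ofList l') := by rw [hl, hl', h]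
    exact Jw_eq_of_con op hRC hlb (mk_eq_iff.mp this)
  -- D I divides D univ
  have hdvd : ∀ I : Finset S, D I ∣ D Finset.univ := by
    intro I
    obtain ⟨l, hl, hJ⟩ := hrep I
    obtain ⟨l', hl', hJ'⟩ := hrep Finset.univ
    rw [← hl, ← hl']
    refine (dvd_iff_Jw hRC hlb l l').mpr fun x => ?_
    rw [hJ, hJ']
    by_cases hx : x ∈ I <;> simp [chi, hx]
  -- part C
  have partC : ∀ g : StructureMonoid op, g ∣ D Finset.univ ↔ ∃ I : Finset S, D I = g := by
    intro g
    constructor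
    · intro hg
      obtain ⟨f, hf⟩ := Con.mk'_surjective g
      obtain ⟨l', hl', hJ'⟩ := hrep Finset.univ
      have hle : ∀ x, Jw op f.toList x ≤ 1 := by
        have := (dvd_iff_Jw hRC hlb f.toList l').mp (by
          rw [show (conGen (rcRel op)).mk' (FreeMonoid.ofList f.toList) = g from hf, hl']
          exact hg)
        intro x
        have h1 := this x
        rw [hJ'] at h1
        simpa [chi] using h1
      set I : Finset S := Finset.univ.filter (fun x => Jw op f.toList x = 1) with hI
      have hJf : Jw op f.toList = chi I := by
        funext x
        by_cases hx : Jw op f.toList x = 1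
        · simp [chi, hI, hx]
        · have : Jw op f.toList x = 0 := by have := hle x; omega
          simp [chi, hI, this]
      obtain ⟨l, hl, hJ⟩ := hrep I
      refine ⟨I, ?_⟩
      rw [← hl, ← show (conGen (rcRel op)).mk' (FreeMonoid.ofList f.toList) = g from hf]
      apply mk_eq_iff.mpr
      exact Jw_inj hRC hlb l.length l f.toList rfl (by rw [hJ, hJf])
    · rintro ⟨I, rfl⟩
      exact hdvd I
  refine ⟨partA, partB, partC, ?_⟩
  -- part D: counting
  have he : Function.Bijective
      (fun I : Finset S => (⟨D I, hdvd I⟩ : {g : StructureMonoid op // g ∣ D Finset.univ})) := by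
    constructor
    · intro I I' h
      exact partB (congrArg Subtype.val h)
    · rintro ⟨g, hg⟩
      obtain ⟨I, hI⟩ := (partC g).mp hg
      exact ⟨I, Subtype.ext hI⟩
  rw [← Nat.card_eq_of_bijective _ he, Nat.card_eq_fintype_card, Fintype.card_finset, hcard]
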